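/- Let (α, β) ∈ △ have a non-terminating triangle sequence. Then for every integer k ≥ 0, |(1, α, β)·C_k| ≤ 1/|x_{k+1}|. -/

import Mathlib

open Matrix Filter

noncomputable section

/-- The triangle `△ = {(x,y) : 1 ≥ x ≥ y > 0}`. -/
def tri : Set (ℝ × ℝ) := {p | 1 ≥ p.1 ∧ p.1 ≥ p.2 ∧ p.2 > 0}

/-- The subtriangle `△_k = {(x,y) ∈ △ : 1 - x - ky ≥ 0 > 1 - x - (k+1)y}`. -/
def triSub (k : ℕ) : Set (ℝ × ℝ) :=
  {p | p ∈ tri ∧ 1 - p.1 - (k : ℝ) * p.2 ≥ 0 ∧ 0 > 1 - p.1 - ((k : ℝ) + 1) * p.2}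

/-- The index `k` with `(x,y) ∈ △_k`, i.e. `⌊(1-x)/y⌋`. -/
def triIndex (p : ℝ × ℝ) : ℤ := ⌊(1 - p.1) / p.2⌋

/-- The triangle map `T`, sending `(α, β) ∈ △_k` to `(β/α, (1 − α − kβ)/α)`. -/
def T (p : ℝ × ℝ) : ℝ × ℝ :=
  (p.2 / p.1, (1 - p.1 - (triIndex p : ℝ) * p.2) / p.1)

/-- The vectors `C_k` (with indices shifted by 3):
`Cvec a 0 = C₋₃ = (1,0,0)ᵀ`, `Cvec a 1 = C₋₂ = (0,1,0)ᵀ`, `Cvec a 2 = C₋₁ = (0,0,1)ᵀ`,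
and `Cvec a (k+3) = C_k = C_{k-3} - C_{k-2} - a_k C_{k-1}` for `k ≥ 0`. -/
def Cvec (a : ℕ → ℕ) : ℕ → Fin 3 → ℝ
  | 0 => ![1, 0, 0]
  | 1 => ![0, 1, 0]
  | 2 => ![0, 0, 1]
  | (n + 3) => Cvec a n - Cvec a (n + 1) - (a n : ℝ) • Cvec a (n + 2)

/-- `d_k = (1, α, β) · C_k`, with the index shifted by 3: `dvec a α β (k+3) = d_k`. -/
def dvec (a : ℕ → ℕ) (α β : ℝ) (n : ℕ) : ℝ := ![1, α, β] ⬝ᵥ Cvec a n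

/-- `X_n = C_n × C_{n+1}`, with the index shifted by 2: `Xvec a (n+2) = X_n`
(`X_n` is defined for `n ≥ -2`). -/
def Xvec (a : ℕ → ℕ) (n : ℕ) : Fin 3 → ℝ :=
  crossProduct (Cvec a (n + 1)) (Cvec a (n + 2))

/-! ### Auxiliary algebra lemmas -/

lemma trip_shift (A B C : Fin 3 → ℝ) (t : ℝ) :
    B ⬝ᵥ crossProduct C (A - B - t • C) = A ⬝ᵥ crossProduct B C := by
  simp [crossProduct, dotProduct, Fin.sum_univ_three]
  ring

lemma key_expand (A B C v : Fin 3 → ℝ) :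
    v 0 * (A ⬝ᵥ crossProduct B C) =
      (crossProduct B C) 0 * (v ⬝ᵥ A) + (crossProduct C A) 0 * (v ⬝ᵥ B)
        + (crossProduct A B) 0 * (v ⬝ᵥ C) := by
  simp [crossProduct, dotProduct, Fin.sum_univ_three]
  ring

lemma cross0_right (A B C : Fin 3 → ℝ) (t : ℝ) :
    (crossProduct C (A - B - t • C)) 0
      = (crossProduct C A) 0 + (crossProduct B C) 0 := by
  simp [crossProduct]
  ring

lemma cross0_left (A B C : Fin 3 → ℝ) (t : ℝ) :
    (crossProduct (A - B - t • C) B) 0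
      = (crossProduct A B) 0 + t * (crossProduct B C) 0 := by
  simp [crossProduct]
  ring

lemma Cvec_add_three (a : ℕ → ℕ) (n : ℕ) :
    Cvec a (n + 3) = Cvec a n - Cvec a (n + 1) - (a n : ℝ) • Cvec a (n + 2) := rfl

/-- The triple product `det(C_n, C_{n+1}, C_{n+2}) = 1`. -/
lemma trip_one (a : ℕ → ℕ) :
    ∀ n, Cvec a n ⬝ᵥ crossProduct (Cvec a (n + 1)) (Cvec a (n + 2)) = 1 := by
  intro n
  induction n with
  | zero =>
      show Cvec a 0 ⬝ᵥ crossProduct (Cvec a 1) (Cvec a 2) = 1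
      simp [Cvec, crossProduct, dotProduct, Fin.sum_univ_three]
  | succ n ih =>
      show Cvec a (n + 1) ⬝ᵥ crossProduct (Cvec a (n + 2)) (Cvec a (n + 3)) = 1
      rw [Cvec_add_three, trip_shift]
      exact ih

/-- Nonnegativity (and a lower bound) for the first coordinates of the dual vectors. -/
lemma dual_nonneg (a : ℕ → ℕ) :
    ∀ n, 1 ≤ (crossProduct (Cvec a (n + 1)) (Cvec a (n + 2))) 0 ∧
      0 ≤ (crossProduct (Cvec a (n + 2)) (Cvec a n)) 0 ∧
      0 ≤ (crossProduct (Cvec a n) (Cvec a (n + 1))) 0 := by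
  intro n
  induction n with
  | zero =>
      refine ⟨?_, ?_, ?_⟩
      · show (1:ℝ) ≤ (crossProduct (Cvec a 1) (Cvec a 2)) 0
        norm_num [Cvec, crossProduct]
        exact le_of_eq rfl
      · show (0:ℝ) ≤ (crossProduct (Cvec a 2) (Cvec a 0)) 0
        norm_num [Cvec, crossProduct]
      · show (0:ℝ) ≤ (crossProduct (Cvec a 0) (Cvec a 1)) 0
        norm_num [Cvec, crossProduct]
        exact le_of_eq rfl
  | succ n ih =>
      obtain ⟨hu, hw, hv⟩ := ih
      refine ⟨?_, ?_, ?_⟩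
      · show 1 ≤ (crossProduct (Cvec a (n + 2)) (Cvec a (n + 3))) 0
        rw [Cvec_add_three, cross0_right]
        linarith
      · show 0 ≤ (crossProduct (Cvec a (n + 3)) (Cvec a (n + 1))) 0
        rw [Cvec_add_three, cross0_left]
        have : (0:ℝ) ≤ (a n : ℝ) := Nat.cast_nonneg _
        nlinarith
      · show 0 ≤ (crossProduct (Cvec a (n + 1)) (Cvec a (n + 2))) 0
        linarith

theorem abs_dot_C_le (α β : ℝ) (a : ℕ → ℕ)
    (hseq : ∀ n : ℕ, T^[n] (α, β) ∈ triSub (a n)) :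
    ∀ k : ℕ, |dvec a α β (k + 3)| ≤ 1 / |Xvec a (k + 3) 0| := by
  set p : ℕ → ℝ × ℝ := fun n => T^[n] (α, β) with hp
  have hy : ∀ n, 0 < (p n).2 := fun n => (hseq n).1.2.2
  have hx : ∀ n, 0 < (p n).1 := fun n => lt_of_lt_of_le (hy n) (hseq n).1.2.1
  -- the triangle sequence index is `a n`
  have hidx : ∀ n, triIndex (p n) = (a n : ℤ) := by
    intro n
    obtain ⟨_, h4, h5⟩ := hseq n
    rw [triIndex, Int.floor_eq_iff]
    constructor
    · rw [le_div_iff₀ (hy n)]; push_cast; linarith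
    · rw [div_lt_iff₀ (hy n)]; push_cast; linarith
  -- the dynamics
  have hstep1 : ∀ n, (p (n + 1)).1 = (p n).2 / (p n).1 := by
    intro n
    have : p (n + 1) = T (p n) := Function.iterate_succ_apply' T n (α, β)
    rw [this, T]
  have hstep2 : ∀ n, (p (n + 1)).2 = (1 - (p n).1 - (a n : ℝ) * (p n).2) / (p n).1 := by
    intro n
    have h : p (n + 1) = T (p n) := Function.iterate_succ_apply' T n (α, β)
    rw [h, T]
    simp [hidx n]
  -- values of dvec
  have hd0 : dvec a α β 0 = 1 := by
    simp [dvec, Cvec, dotProduct, Fin.sum_univ_three]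
  have hd1 : dvec a α β 1 = α := by
    simp [dvec, Cvec, dotProduct, Fin.sum_univ_three]
  have hd2 : dvec a α β 2 = β := by
    simp [dvec, Cvec, dotProduct, Fin.sum_univ_three]
  have hrec : ∀ n, dvec a α β (n + 3)
      = dvec a α β n - dvec a α β (n + 1) - (a n : ℝ) * dvec a α β (n + 2) := by
    intro n
    simp [dvec, Cvec_add_three, dotProduct_sub, dotProduct_smul, smul_eq_mul]
  -- the product formula
  set P : ℕ → ℝ := fun n => ∏ i ∈ Finset.range n, (p i).1 with hP
  have hPpos : ∀ n, 0 < P n := by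
    intro n
    exact Finset.prod_pos fun i _ => hx i
  have hinv : ∀ n, dvec a α β n = P n ∧ dvec a α β (n + 1) = P n * (p n).1 ∧
      dvec a α β (n + 2) = P n * (p n).2 := by
    intro n
    induction n with
    | zero =>
        have hp0 : p 0 = (α, β) := rfl
        refine ⟨by simpa [hP] using hd0, ?_, ?_⟩
        · simp [hP, hp0, hd1]
        · simp [hP, hp0, hd2]
    | succ n ih =>
        obtain ⟨h0, h1, h2⟩ := ih
        have hxne : (p n).1 ≠ 0 := ne_of_gt (hx n)
        have hPn : P (n + 1) = P n * (p n).1 := Finset.prod_range_succ _ _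
        refine ⟨by rw [h1, hPn], ?_, ?_⟩
        · show dvec a α β (n + 2) = P (n + 1) * (p (n + 1)).1
          rw [h2, hPn, hstep1 n]
          field_simp
        · show dvec a α β (n + 3) = P (n + 1) * (p (n + 1)).2
          rw [hrec n, h0, h1, h2, hPn, hstep2 n]
          field_simp
  have hdpos : ∀ n, 0 < dvec a α β n := fun n => (hinv n).1 ▸ hPpos n
  -- conclusion
  intro k
  obtain ⟨hu, hw, hv⟩ := dual_nonneg a (k + 3)
  have hkey := key_expand (Cvec a (k + 3)) (Cvec a (k + 4)) (Cvec a (k + 5)) ![1, α, β]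
  have htrip := trip_one a (k + 3)
  have hv0 : (![1, α, β] : Fin 3 → ℝ) 0 = 1 := rfl
  have htrip' : Cvec a (k + 3) ⬝ᵥ crossProduct (Cvec a (k + 4)) (Cvec a (k + 5)) = 1 := htrip
  have hu' : 1 ≤ (crossProduct (Cvec a (k + 4)) (Cvec a (k + 5))) 0 := hu
  have hw' : 0 ≤ (crossProduct (Cvec a (k + 5)) (Cvec a (k + 3))) 0 := hw
  have hv' : 0 ≤ (crossProduct (Cvec a (k + 3)) (Cvec a (k + 4))) 0 := hv
  rw [hv0, htrip', mul_one] at hkey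
  -- hkey : 1 = u * d(k+3) + w * d(k+4) + v * d(k+5)
  have hd3 := hdpos (k + 3)
  have hd4 := hdpos (k + 4)
  have hd5 := hdpos (k + 5)
  have hXval : Xvec a (k + 3) 0 = (crossProduct (Cvec a (k + 4)) (Cvec a (k + 5))) 0 := rfl
  have hupos : 0 < Xvec a (k + 3) 0 := by rw [hXval]; linarith [hu']
  rw [abs_of_pos (hdpos (k + 3)), abs_of_pos hupos, le_div_iff₀ hupos, hXval]
  have hterm1 : 0 ≤ (crossProduct (Cvec a (k + 5)) (Cvec a (k + 3))) 0 * (![1, α, β] ⬝ᵥ Cvec a (k + 4)) :=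
    mul_nonneg hw' (le_of_lt hd4)
  have hterm2 : 0 ≤ (crossProduct (Cvec a (k + 3)) (Cvec a (k + 4))) 0 * (![1, α, β] ⬝ᵥ Cvec a (k + 5)) :=
    mul_nonneg hv' (le_of_lt hd5)
  have : (crossProduct (Cvec a (k + 4)) (Cvec a (k + 5))) 0 * dvec a α β (k + 3) ≤ 1 := by
    rw [dvec]
    linarith [hkey]
  linarith [this]

end
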